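/- Let t ≥ 3. Let B be a 3-uniform hypergraph on n vertices with no K_{2,t} trace and all co-degrees at most 3t−3, with average degree d = 3e(B)/n. Then d² n ≤ 3(t−1)²(3t−1)n² + 2f(t)dn, where f(t) = 3t−3 + 3(t−1)²(6t−2); consequently d ≤ √(3(3t−1))·(t−1)·√n + O_t(1) and e(B) ≤ (√(3(3t−1))(t−1)/3)·n^{3/2} + O_t(n). -/

import Mathlib

open Finset

/-- The co-degree of a pair of vertices. -/
def codeg {V : Type*} [DecidableEq V] (H : Finset (Finset V)) (x y : V) : ℕ :=
  (H.filter fun e => x ∈ e ∧ y ∈ e).card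

/-- `H` contains `K_{2,t}` as a trace. -/
def HasK2tTrace (t : ℕ) {V : Type*} [DecidableEq V] (H : Finset (Finset V)) : Prop :=
  ∃ (x y : V) (u : Fin t → V) (e f : Fin t → Finset V),
    x ≠ y ∧ Function.Injective u ∧ (∀ i, u i ≠ x ∧ u i ≠ y) ∧
    (∀ i, e i ∈ H) ∧ (∀ i, f i ∈ H) ∧
    Function.Injective e ∧ Function.Injective f ∧ (∀ i j, e i ≠ f j) ∧
    (∀ i, e i ∩ insert x (insert y (Finset.image u Finset.univ)) = {x, u i}) ∧
    (∀ i, f i ∩ insert x (insert y (Finset.image u Finset.univ)) = {y, u i})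

/-- external neighborhood of `v` towards `x`, avoiding `y`. -/
def NX {n : ℕ} (B : Finset (Finset (Fin n))) (x y v : Fin n) : Finset (Fin n) :=
  Finset.univ.filter fun w => ({x, v, w} : Finset (Fin n)) ∈ B ∧ w ≠ x ∧ w ≠ y ∧ w ≠ v

lemma mem_NX {n : ℕ} {B : Finset (Finset (Fin n))} {x y v w : Fin n} :
    w ∈ NX B x y v ↔ ({x, v, w} : Finset (Fin n)) ∈ B ∧ w ≠ x ∧ w ≠ y ∧ w ≠ v := by
  simp [NX]

lemma trace_of_T {n t : ℕ} (B : Finset (Finset (Fin n))) (x y : Fin n) (hxy : x ≠ y)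
    (T : Finset (Fin n)) (hT : T.card = t) (hxT : x ∉ T) (hyT : y ∉ T)
    (hA : ∀ v ∈ T, ∃ a, a ∉ T ∧ a ∈ NX B x y v)
    (hB : ∀ v ∈ T, ∃ b, b ∉ T ∧ b ∈ NX B y x v) :
    HasK2tTrace t B := by
  classical
  set u : Fin t → Fin n := fun i => (T.orderIsoOfFin hT i : Fin n) with hu
  have hmem : ∀ i : Fin t, u i ∈ T := fun i => (T.orderIsoOfFin hT i).2
  have hu_inj : Function.Injective u := fun i j h =>
    (T.orderIsoOfFin hT).injective (Subtype.ext h)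
  have himg : Finset.image u Finset.univ = T := by
    apply Finset.eq_of_subset_of_card_le
    · intro z hz
      rw [Finset.mem_image] at hz
      obtain ⟨i, -, rfl⟩ := hz
      exact hmem i
    · rw [hT, Finset.card_image_of_injective _ hu_inj, Finset.card_univ, Fintype.card_fin]
  choose a haT haN using fun i => hA (u i) (hmem i)
  choose b hbT hbN using fun i => hB (u i) (hmem i)
  have hux : ∀ i, u i ≠ x := fun i h => hxT (h ▸ hmem i)
  have huy : ∀ i, u i ≠ y := fun i h => hyT (h ▸ hmem i)
  have haB : ∀ i, ({x, u i, a i} : Finset (Fin n)) ∈ B := fun i => (mem_NX.1 (haN i)).1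
  have hax : ∀ i, a i ≠ x := fun i => (mem_NX.1 (haN i)).2.1
  have hay : ∀ i, a i ≠ y := fun i => (mem_NX.1 (haN i)).2.2.1
  have hau : ∀ i, a i ≠ u i := fun i => (mem_NX.1 (haN i)).2.2.2
  have hbB : ∀ i, ({y, u i, b i} : Finset (Fin n)) ∈ B := fun i => (mem_NX.1 (hbN i)).1
  have hbx : ∀ i, b i ≠ y := fun i => (mem_NX.1 (hbN i)).2.1
  have hby : ∀ i, b i ≠ x := fun i => (mem_NX.1 (hbN i)).2.2.1
  have hbu : ∀ i, b i ≠ u i := fun i => (mem_NX.1 (hbN i)).2.2.2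
  set S : Finset (Fin n) := insert x (insert y (Finset.image u Finset.univ)) with hS
  have hSmem : ∀ z, z ∈ S ↔ (z = x ∨ z = y ∨ z ∈ T) := by
    intro z; rw [hS, himg]; simp [Finset.mem_insert]
  have hxS : x ∈ S := (hSmem x).2 (Or.inl rfl)
  have hyS : y ∈ S := (hSmem y).2 (Or.inr (Or.inl rfl))
  have huS : ∀ i, u i ∈ S := fun i => (hSmem _).2 (Or.inr (Or.inr (hmem i)))
  have hEint : ∀ i, ({x, u i, a i} : Finset (Fin n)) ∩ S = {x, u i} := by
    intro i
    ext z
    simp only [Finset.mem_inter, Finset.mem_insert, Finset.mem_singleton]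
    constructor
    · rintro ⟨(rfl | rfl | rfl), hzS⟩
      · exact Or.inl rfl
      · exact Or.inr rfl
      · rcases (hSmem _).1 hzS with h | h | h
        · exact absurd h (hax i)
        · exact absurd h (hay i)
        · exact absurd h (haT i)
    · rintro (rfl | rfl)
      · exact ⟨Or.inl rfl, hxS⟩
      · exact ⟨Or.inr (Or.inl rfl), huS i⟩
  have hFint : ∀ i, ({y, u i, b i} : Finset (Fin n)) ∩ S = {y, u i} := by
    intro i
    ext z
    simp only [Finset.mem_inter, Finset.mem_insert, Finset.mem_singleton]
    constructor
    · rintro ⟨(rfl | rfl | rfl), hzS⟩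
      · exact Or.inl rfl
      · exact Or.inr rfl
      · rcases (hSmem _).1 hzS with h | h | h
        · exact absurd h (hby i)
        · exact absurd h (hbx i)
        · exact absurd h (hbT i)
    · rintro (rfl | rfl)
      · exact ⟨Or.inl rfl, hyS⟩
      · exact ⟨Or.inr (Or.inl rfl), huS i⟩
  refine ⟨x, y, u, fun i => {x, u i, a i}, fun i => {y, u i, b i}, hxy, hu_inj,
    fun i => ⟨hux i, huy i⟩, haB, hbB, ?_, ?_, ?_, hEint, hFint⟩
  · intro i j hij
    have hij' : ({x, u i, a i} : Finset (Fin n)) = {x, u j, a j} := hij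
    have h2 : ({x, u i} : Finset (Fin n)) = {x, u j} := by
      rw [← hEint i, ← hEint j, hij']
    have : u i ∈ ({x, u j} : Finset (Fin n)) := by
      rw [← h2]; simp
    rcases Finset.mem_insert.1 this with h | h
    · exact absurd h (hux i)
    · exact hu_inj (Finset.mem_singleton.1 h)
  · intro i j hij
    have hij' : ({y, u i, b i} : Finset (Fin n)) = {y, u j, b j} := hij
    have h2 : ({y, u i} : Finset (Fin n)) = {y, u j} := by
      rw [← hFint i, ← hFint j, hij']
    have : u i ∈ ({y, u j} : Finset (Fin n)) := by
      rw [← h2]; simp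
    rcases Finset.mem_insert.1 this with h | h
    · exact absurd h (huy i)
    · exact hu_inj (Finset.mem_singleton.1 h)
  · intro i j hij
    have hij' : ({x, u i, a i} : Finset (Fin n)) = {y, u j, b j} := hij
    have hx1 : x ∈ ({y, u j, b j} : Finset (Fin n)) := by
      rw [← hij']; simp
    have : x ∈ ({y, u j} : Finset (Fin n)) := by
      rw [← hFint j]; exact Finset.mem_inter.2 ⟨hx1, hxS⟩
    rcases Finset.mem_insert.1 this with h | h
    · exact hxy h
    · exact (hux j) (Finset.mem_singleton.1 h).symm
lemma exists_stuck {n t : ℕ} (B : Finset (Finset (Fin n))) (x y : Fin n) (hxy : x ≠ y)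
    (ht : 3 ≤ t) (hnt : ¬ HasK2tTrace t B) :
    ∃ T A₁ A₂ : Finset (Fin n), T.card ≤ t - 1 ∧ A₁.card ≤ t - 1 ∧ A₂.card ≤ t - 1 ∧
      x ∉ T ∧ y ∉ T ∧
      ∀ v, v ≠ x → v ≠ y → v ∉ T → v ∉ A₁ → v ∉ A₂ →
        (NX B x y v).Nonempty → (NX B y x v).Nonempty →
        (NX B x y v ⊆ T ∨ NX B y x v ⊆ T) := by
  classical
  -- the invariant-carrying greedy
  have key : ∀ i, i ≤ t →
      (∃ T A₁ A₂ : Finset (Fin n), T.card ≤ t - 1 ∧ A₁.card ≤ t - 1 ∧ A₂.card ≤ t - 1 ∧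
        x ∉ T ∧ y ∉ T ∧
        ∀ v, v ≠ x → v ≠ y → v ∉ T → v ∉ A₁ → v ∉ A₂ →
          (NX B x y v).Nonempty → (NX B y x v).Nonempty →
          (NX B x y v ⊆ T ∨ NX B y x v ⊆ T)) ∨
      (∃ (T : Finset (Fin n)) (σ τ : Fin n → Fin n), T.card = i ∧ x ∉ T ∧ y ∉ T ∧
        ∀ v ∈ T, σ v ∈ NX B x y v ∧ σ v ∉ T ∧ τ v ∈ NX B y x v ∧ τ v ∉ T) := by
    intro i
    induction i with
    | zero =>
      intro _
      right
      exact ⟨∅, id, id, rfl, Finset.notMem_empty x, Finset.notMem_empty y,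
        fun v hv => absurd hv (Finset.notMem_empty v)⟩
    | succ i IH =>
      intro hi
      rcases IH (Nat.le_of_succ_le hi) with hstuck | ⟨T, σ, τ, hc, hxT, hyT, hinv⟩
      · exact Or.inl hstuck
      by_cases hv : ∃ v, v ≠ x ∧ v ≠ y ∧ v ∉ T ∧ v ∉ T.image σ ∧ v ∉ T.image τ ∧
          (NX B x y v \ T).Nonempty ∧ (NX B y x v \ T).Nonempty
      · obtain ⟨v₀, hv0x, hv0y, hv0T, hv0σ, hv0τ, ⟨a, ha⟩, ⟨b, hb⟩⟩ := hv
        rw [Finset.mem_sdiff] at ha hb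
        right
        refine ⟨insert v₀ T, Function.update σ v₀ a, Function.update τ v₀ b, ?_, ?_, ?_, ?_⟩
        · rw [Finset.card_insert_of_notMem hv0T, hc]
        · rw [Finset.mem_insert]; rintro (h | h); exact hv0x h.symm; exact hxT h
        · rw [Finset.mem_insert]; rintro (h | h); exact hv0y h.symm; exact hyT h
        · intro v hvmem
          rcases Finset.mem_insert.1 hvmem with rfl | hvT
          · rw [Function.update_self, Function.update_self]
            have hav : a ≠ v := (mem_NX.1 ha.1).2.2.2
            have hbv : b ≠ v := (mem_NX.1 hb.1).2.2.2
            refine ⟨ha.1, ?_, hb.1, ?_⟩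
            · rw [Finset.mem_insert]; rintro (h | h); exact hav h; exact ha.2 h
            · rw [Finset.mem_insert]; rintro (h | h); exact hbv h; exact hb.2 h
          · have hvv0 : v ≠ v₀ := fun h => hv0T (h ▸ hvT)
            rw [Function.update_of_ne hvv0, Function.update_of_ne hvv0]
            obtain ⟨h1, h2, h3, h4⟩ := hinv v hvT
            refine ⟨h1, ?_, h3, ?_⟩
            · rw [Finset.mem_insert]
              rintro (h | h)
              · exact hv0σ (Finset.mem_image.2 ⟨v, hvT, h⟩)
              · exact h2 h
            · rw [Finset.mem_insert]
              rintro (h | h)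
              · exact hv0τ (Finset.mem_image.2 ⟨v, hvT, h⟩)
              · exact h4 h
      · push_neg at hv
        left
        refine ⟨T, T.image σ, T.image τ, ?_, ?_, ?_, hxT, hyT, ?_⟩
        · omega
        · calc (T.image σ).card ≤ T.card := Finset.card_image_le
            _ ≤ t - 1 := by omega
        · calc (T.image τ).card ≤ T.card := Finset.card_image_le
            _ ≤ t - 1 := by omega
        · intro v h1 h2 h3 h4 h5 hne1 hne2
          have hnand := hv v h1 h2 h3 h4 h5
          by_cases hss : (NX B x y v \ T).Nonempty
          · right
            rw [← Finset.sdiff_eq_empty_iff_subset, ← Finset.not_nonempty_iff_eq_empty]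
            exact Finset.not_nonempty_iff_eq_empty.2 (hnand hss)
          · left
            rw [← Finset.sdiff_eq_empty_iff_subset, ← Finset.not_nonempty_iff_eq_empty]
            exact hss
  rcases key t le_rfl with hstuck | ⟨T, σ, τ, hc, hxT, hyT, hinv⟩
  · exact hstuck
  · exfalso
    apply hnt
    refine trace_of_T B x y hxy T hc hxT hyT ?_ ?_
    · intro v hv; exact ⟨σ v, (hinv v hv).2.1, (hinv v hv).1⟩
    · intro v hv; exact ⟨τ v, (hinv v hv).2.2.2, (hinv v hv).2.2.1⟩

lemma big_small {n t : ℕ} (B : Finset (Finset (Fin n))) (x y : Fin n) (hxy : x ≠ y)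
    (ht : 3 ≤ t) (hnt : ¬ HasK2tTrace t B) :
    (Finset.univ.filter fun v : Fin n =>
      v ≠ x ∧ v ≠ y ∧ t ≤ (NX B x y v).card ∧ t ≤ (NX B y x v).card).card ≤ t - 1 := by
  classical
  by_contra hcon
  push_neg at hcon
  have hle : t ≤ (Finset.univ.filter fun v : Fin n =>
      v ≠ x ∧ v ≠ y ∧ t ≤ (NX B x y v).card ∧ t ≤ (NX B y x v).card).card := by omega
  obtain ⟨T, hTsub, hTcard⟩ := Finset.exists_subset_card_eq hle
  apply hnt
  have hprop : ∀ v ∈ T, v ≠ x ∧ v ≠ y ∧ t ≤ (NX B x y v).card ∧ t ≤ (NX B y x v).card :=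
    fun v hv => (Finset.mem_filter.1 (hTsub hv)).2
  have hxT : x ∉ T := fun h => (hprop x h).1 rfl
  have hyT : y ∉ T := fun h => (hprop y h).2.1 rfl
  refine trace_of_T B x y hxy T hTcard hxT hyT ?_ ?_
  · intro v hv
    by_contra hno
    push_neg at hno
    have hsub : NX B x y v ⊆ T.erase v := by
      intro w hw
      rw [Finset.mem_erase]
      refine ⟨(mem_NX.1 hw).2.2.2, ?_⟩
      by_contra hwT
      exact hno w hwT hw
    have := Finset.card_le_card hsub
    rw [Finset.card_erase_of_mem hv, hTcard] at this
    have := (hprop v hv).2.2.1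
    omega
  · intro v hv
    by_contra hno
    push_neg at hno
    have hsub : NX B y x v ⊆ T.erase v := by
      intro w hw
      rw [Finset.mem_erase]
      refine ⟨(mem_NX.1 hw).2.2.2, ?_⟩
      by_contra hwT
      exact hno w hwT hw
    have := Finset.card_le_card hsub
    rw [Finset.card_erase_of_mem hv, hTcard] at this
    have := (hprop v hv).2.2.2
    omega
lemma third_vertex {V : Type*} [DecidableEq V] {e : Finset V} (h3 : e.card = 3) {x v : V}
    (hx : x ∈ e) (hv : v ∈ e) (hxv : x ≠ v) : ∃ w, w ≠ x ∧ w ≠ v ∧ e = {x, v, w} := by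
  classical
  have hv' : v ∈ e.erase x := Finset.mem_erase.2 ⟨Ne.symm hxv, hv⟩
  have h1 : ((e.erase x).erase v).card = 1 := by
    rw [Finset.card_erase_of_mem hv', Finset.card_erase_of_mem hx, h3]
  obtain ⟨w, hw⟩ := Finset.card_eq_one.1 h1
  have hwmem : w ∈ (e.erase x).erase v := hw ▸ Finset.mem_singleton_self w
  have hwv : w ≠ v := (Finset.mem_erase.1 hwmem).1
  have hwx : w ≠ x := (Finset.mem_erase.1 (Finset.mem_erase.1 hwmem).2).1
  refine ⟨w, hwx, hwv, ?_⟩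
  have e1 : insert v ((e.erase x).erase v) = e.erase x := Finset.insert_erase hv'
  have e2 : insert x (e.erase x) = e := Finset.insert_erase hx
  rw [← e2, ← e1, hw]

lemma card_triple {V : Type*} [DecidableEq V] {x y v : V} (h1 : x ≠ y) (h2 : x ≠ v)
    (h3 : y ≠ v) : ({x, y, v} : Finset V).card = 3 :=
  Finset.card_eq_three.2 ⟨x, y, v, h1, h2, h3, rfl⟩

lemma NX_card_le_codeg {n : ℕ} {B : Finset (Finset (Fin n))} {x y v : Fin n} :
    (NX B x y v).card ≤ codeg B x v := by
  classical
  apply Finset.card_le_card_of_injOn (fun w => ({x, v, w} : Finset (Fin n)))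
  · intro w hw
    rw [Finset.mem_coe, Finset.mem_filter]
    refine ⟨(mem_NX.1 hw).1, by simp, by simp⟩
  · intro w hw w' hw' heq
    rw [Finset.mem_coe] at hw hw'
    have heq' : ({x, v, w} : Finset (Fin n)) = {x, v, w'} := heq
    have : w ∈ ({x, v, w'} : Finset (Fin n)) := heq' ▸ (by simp)
    simp only [Finset.mem_insert, Finset.mem_singleton] at this
    rcases this with h | h | h
    · exact absurd h (mem_NX.1 hw).2.1
    · exact absurd h (mem_NX.1 hw).2.2.2
    · exact h

lemma codeg_le_NX {n : ℕ} {B : Finset (Finset (Fin n))} (hcard3 : ∀ e ∈ B, e.card = 3)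
    {x y v : Fin n} (hxy : x ≠ y) (hxv : x ≠ v) (hyv : y ≠ v) :
    codeg B x v ≤ (NX B x y v).card + (if ({x, y, v} : Finset (Fin n)) ∈ B then 1 else 0) := by
  classical
  unfold codeg
  rw [← Finset.card_filter_add_card_filter_not (p := fun e => y ∈ e),
    Finset.filter_filter, Finset.filter_filter]
  have hpart1 : (B.filter fun e => (x ∈ e ∧ v ∈ e) ∧ y ∈ e).card ≤
      (if ({x, y, v} : Finset (Fin n)) ∈ B then 1 else 0) := by
    have hsub : (B.filter fun e => (x ∈ e ∧ v ∈ e) ∧ y ∈ e) ⊆ {({x, y, v} : Finset (Fin n))} := by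
      intro e he
      rw [Finset.mem_filter] at he
      obtain ⟨heB, ⟨hxe, hve⟩, hye⟩ := he
      have hsub2 : ({x, y, v} : Finset (Fin n)) ⊆ e := by
        intro z hz
        simp only [Finset.mem_insert, Finset.mem_singleton] at hz
        rcases hz with rfl | rfl | rfl <;> assumption
      have := Finset.eq_of_subset_of_card_le hsub2
        (by rw [hcard3 e heB, card_triple hxy hxv hyv])
      rw [Finset.mem_singleton, ← this]
    split_ifs with hmem
    · calc _ ≤ ({({x, y, v} : Finset (Fin n))} : Finset _).card := Finset.card_le_card hsub
        _ = 1 := Finset.card_singleton _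
    · have : (B.filter fun e => (x ∈ e ∧ v ∈ e) ∧ y ∈ e) = ∅ := by
        rw [Finset.eq_empty_iff_forall_notMem]
        intro e he
        have h1 := hsub he
        rw [Finset.mem_singleton] at h1
        rw [Finset.mem_filter] at he
        exact hmem (h1 ▸ he.1)
      rw [this, Finset.card_empty]
  have hpart2 : (B.filter fun e => (x ∈ e ∧ v ∈ e) ∧ ¬ y ∈ e).card ≤ (NX B x y v).card := by
    apply Finset.card_le_card_of_surjOn (fun w => ({x, v, w} : Finset (Fin n)))
    intro e he
    simp only [Finset.coe_filter, Set.mem_setOf_eq] at he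
    obtain ⟨heB, ⟨hxe, hve⟩, hye⟩ := he
    obtain ⟨w, hwx, hwv, hwe⟩ := third_vertex (hcard3 e heB) hxe hve hxv
    have hwy : w ≠ y := by
      rintro rfl
      exact hye (by rw [hwe]; simp)
    refine ⟨w, ?_, hwe.symm⟩
    rw [Finset.mem_coe]
    exact mem_NX.2 ⟨hwe ▸ heB, hwx, hwy, hwv⟩
  omega
lemma count_NX_mem_le {n : ℕ} {B : Finset (Finset (Fin n))} (hcard3 : ∀ e ∈ B, e.card = 3)
    {x y φ : Fin n} :
    (Finset.univ.filter fun v => φ ∈ NX B x y v).card ≤ codeg B x φ := by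
  classical
  apply Finset.card_le_card_of_injOn (fun v => ({x, v, φ} : Finset (Fin n)))
  · intro v hv
    rw [Finset.mem_coe, Finset.mem_filter] at hv
    rw [Finset.mem_coe, Finset.mem_filter]
    exact ⟨(mem_NX.1 hv.2).1, by simp, by simp⟩
  · intro v hv v' hv' heq
    rw [Finset.mem_coe, Finset.mem_filter] at hv hv'
    have hB : ({x, v, φ} : Finset (Fin n)) ∈ B := (mem_NX.1 hv.2).1
    have hφv : φ ≠ v := (mem_NX.1 hv.2).2.2.2
    have hvx : v ≠ x := by
      rintro rfl
      have hc := hcard3 _ hB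
      rw [Finset.insert_idem] at hc
      have h2 := Finset.card_insert_le v ({φ} : Finset (Fin n))
      rw [Finset.card_singleton] at h2
      omega
    have heq' : ({x, v, φ} : Finset (Fin n)) = {x, v', φ} := heq
    have : v ∈ ({x, v', φ} : Finset (Fin n)) := heq' ▸ (by simp)
    simp only [Finset.mem_insert, Finset.mem_singleton] at this
    rcases this with h | h | h
    · exact absurd h hvx
    · exact h
    · exact absurd h.symm hφv

lemma count_xyv_le {n : ℕ} {B : Finset (Finset (Fin n))} {x y : Fin n} :
    (Finset.univ.filter fun v => v ≠ x ∧ v ≠ y ∧ ({x, y, v} : Finset (Fin n)) ∈ B).card ≤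
      codeg B x y := by
  classical
  apply Finset.card_le_card_of_injOn (fun v => ({x, y, v} : Finset (Fin n)))
  · intro v hv
    rw [Finset.mem_coe, Finset.mem_filter] at hv
    rw [Finset.mem_coe, Finset.mem_filter]
    exact ⟨hv.2.2.2, by simp, by simp⟩
  · intro v hv v' hv' heq
    rw [Finset.mem_coe, Finset.mem_filter] at hv hv'
    have heq' : ({x, y, v} : Finset (Fin n)) = {x, y, v'} := heq
    have : v ∈ ({x, y, v'} : Finset (Fin n)) := heq' ▸ (by simp)
    simp only [Finset.mem_insert, Finset.mem_singleton] at this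
    rcases this with h | h | h
    · exact absurd h hv.2.1
    · exact absurd h hv.2.2.1
    · exact h

lemma sum_inter_card_le {n : ℕ} {B : Finset (Finset (Fin n))} (hcard3 : ∀ e ∈ B, e.card = 3)
    {x y : Fin n} {T : Finset (Fin n)} {m : ℕ} (hcodeg : ∀ φ ∈ T, codeg B x φ ≤ m) :
    ∑ v : Fin n, ((NX B x y v) ∩ T).card ≤ T.card * m := by
  classical
  have hper : ∀ v : Fin n, ((NX B x y v) ∩ T).card =
      ∑ φ ∈ T, (if φ ∈ NX B x y v then 1 else 0) := by
    intro v
    rw [Finset.inter_comm, ← Finset.filter_mem_eq_inter, Finset.card_filter]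
  calc ∑ v : Fin n, ((NX B x y v) ∩ T).card
      = ∑ v : Fin n, ∑ φ ∈ T, (if φ ∈ NX B x y v then 1 else 0) :=
        Finset.sum_congr rfl (fun v _ => hper v)
    _ = ∑ φ ∈ T, ∑ v : Fin n, (if φ ∈ NX B x y v then 1 else 0) := Finset.sum_comm
    _ = ∑ φ ∈ T, (Finset.univ.filter fun v => φ ∈ NX B x y v).card := by
        refine Finset.sum_congr rfl (fun φ _ => ?_)
        rw [Finset.card_filter]
    _ ≤ ∑ _φ ∈ T, m :=
        Finset.sum_le_sum (fun φ hφ => le_trans (count_NX_mem_le hcard3) (hcodeg φ hφ))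
    _ = T.card * m := by rw [Finset.sum_const, smul_eq_mul]

lemma perpair {n t : ℕ} (B : Finset (Finset (Fin n))) (ht : 3 ≤ t)
    (hcard3 : ∀ e ∈ B, e.card = 3) (hnt : ¬ HasK2tTrace t B)
    (hcodeg : ∀ a b : Fin n, a ≠ b → codeg B a b ≤ 3 * t - 3) (x y : Fin n) :
    ∑ v : Fin n, (if x ≠ y ∧ v ≠ x ∧ v ≠ y then codeg B x v * codeg B y v else 0) ≤
      36 * (t-1)^3 + 3 * (t-1) * (6 * (t-1) + 1) := by
  classical
  by_cases hxy : x = y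
  · simp [hxy]
  replace hxy : x ≠ y := hxy
  obtain ⟨T, A₁, A₂, hTc, hA1c, hA2c, hxT, hyT, hstuck⟩ := exists_stuck B x y hxy ht hnt
  set k := t - 1 with hk
  have hc3 : ∀ a b : Fin n, a ≠ b → codeg B a b ≤ 3 * k := by
    intro a b h; have := hcodeg a b h; omega
  set Big := (Finset.univ.filter fun v : Fin n =>
      v ≠ x ∧ v ≠ y ∧ t ≤ (NX B x y v).card ∧ t ≤ (NX B y x v).card) with hBig
  have hbigc : Big.card ≤ k := big_small B x y hxy ht hnt
  have hpoint : ∀ v : Fin n,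
      (if x ≠ y ∧ v ≠ x ∧ v ≠ y then codeg B x v * codeg B y v else 0) ≤
        (if v ∈ Big then 9*k^2 else 0)
        + ((if v ∈ T ∪ A₁ ∪ A₂ then 3*k^2 else 0)
        + (3*k * ((NX B x y v) ∩ T).card
        + (3*k * ((NX B y x v) ∩ T).card
        + (6*k+1) * (if (v ≠ x ∧ v ≠ y ∧ ({x,y,v} : Finset (Fin n)) ∈ B) then 1 else 0)))) := by
    intro v
    by_cases hcond : x ≠ y ∧ v ≠ x ∧ v ≠ y
    swap
    · rw [if_neg hcond]; exact Nat.zero_le _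
    obtain ⟨-, hvx, hvy⟩ := hcond
    rw [if_pos ⟨hxy, hvx, hvy⟩]
    set α := (NX B x y v).card with hα
    set β := (NX B y x v).card with hβ
    set e₀ := (if ({x,y,v} : Finset (Fin n)) ∈ B then 1 else 0) with he₀def
    have hε : (if (v ≠ x ∧ v ≠ y ∧ ({x,y,v} : Finset (Fin n)) ∈ B) then 1 else 0) = e₀ := by
      rw [he₀def]
      by_cases hm : ({x,y,v} : Finset (Fin n)) ∈ B
      · rw [if_pos ⟨hvx, hvy, hm⟩, if_pos hm]
      · rw [if_neg (fun hcon => hm hcon.2.2), if_neg hm]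
    have he₀1 : e₀ ≤ 1 := by rw [he₀def]; split_ifs <;> omega
    have hαc : α ≤ 3*k := le_trans NX_card_le_codeg (hc3 x v (Ne.symm hvx))
    have hβc : β ≤ 3*k := le_trans NX_card_le_codeg (hc3 y v (Ne.symm hvy))
    have hcx : codeg B x v ≤ α + e₀ := codeg_le_NX hcard3 hxy (Ne.symm hvx) (Ne.symm hvy)
    have hcy : codeg B y v ≤ β + e₀ := by
      have h0 := codeg_le_NX hcard3 (Ne.symm hxy) (Ne.symm hvy) (Ne.symm hvx)
      rwa [show ({y,x,v} : Finset (Fin n)) = {x,y,v} from Finset.insert_comm y x {v}] at h0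
    have hprod : codeg B x v * codeg B y v ≤ α*β + (6*k+1)*e₀ := by
      calc codeg B x v * codeg B y v ≤ (α + e₀) * (β + e₀) := Nat.mul_le_mul hcx hcy
        _ = α*β + e₀*(α+β+e₀) := by ring
        _ ≤ α*β + e₀*(6*k+1) := by
            have h6 : α+β+e₀ ≤ 6*k+1 := by omega
            exact Nat.add_le_add_left (Nat.mul_le_mul le_rfl h6) _
        _ = α*β + (6*k+1)*e₀ := by ring
    rw [hε]
    have hαβ : α*β ≤ (if v ∈ Big then 9*k^2 else 0)
        + ((if v ∈ T ∪ A₁ ∪ A₂ then 3*k^2 else 0)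
        + (3*k * ((NX B x y v) ∩ T).card + 3*k * ((NX B y x v) ∩ T).card)) := by
      by_cases hb : v ∈ Big
      · rw [if_pos hb]
        have h9 : α*β ≤ 9*k^2 := by
          calc α*β ≤ (3*k)*(3*k) := Nat.mul_le_mul hαc hβc
            _ = 9*k^2 := by ring
        exact le_trans h9 (Nat.le_add_right _ _)
      · have hnb : ¬(v ≠ x ∧ v ≠ y ∧ t ≤ (NX B x y v).card ∧ t ≤ (NX B y x v).card) :=
          fun hcon => hb (Finset.mem_filter.2 ⟨Finset.mem_univ v, hcon⟩)
        have hsmall : α ≤ k ∨ β ≤ k := by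
          rcases Nat.lt_or_ge α t with h | h
          · left; omega
          · right
            have hcon : ¬ (t ≤ β) := fun hcon => hnb ⟨hvx, hvy, h, hcon⟩
            omega
        by_cases hTAB : v ∈ T ∪ A₁ ∪ A₂
        · rw [if_pos hTAB]
          have h3 : α*β ≤ 3*k^2 := by
            rcases hsmall with h | h
            · calc α*β ≤ k*(3*k) := Nat.mul_le_mul h hβc
                _ = 3*k^2 := by ring
            · calc α*β ≤ (3*k)*k := Nat.mul_le_mul hαc h
                _ = 3*k^2 := by ring
          exact le_trans h3 (le_trans (Nat.le_add_right _ _) (Nat.le_add_left _ _))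
        · rcases Nat.eq_zero_or_pos α with h0 | hposα
          · rw [h0, Nat.zero_mul]; exact Nat.zero_le _
          rcases Nat.eq_zero_or_pos β with h0 | hposβ
          · rw [h0, Nat.mul_zero]; exact Nat.zero_le _
          have hvT : v ∉ T := fun h =>
            hTAB (Finset.mem_union.2 (Or.inl (Finset.mem_union.2 (Or.inl h))))
          have hvA1 : v ∉ A₁ := fun h =>
            hTAB (Finset.mem_union.2 (Or.inl (Finset.mem_union.2 (Or.inr h))))
          have hvA2 : v ∉ A₂ := fun h => hTAB (Finset.mem_union.2 (Or.inr h))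
          have hsub := hstuck v hvx hvy hvT hvA1 hvA2
            (Finset.card_pos.1 hposα) (Finset.card_pos.1 hposβ)
          rcases hsub with hs | hs
          · have hint : (NX B x y v) ∩ T = NX B x y v := Finset.inter_eq_left.2 hs
            have hfin : α*β ≤ 3*k * ((NX B x y v) ∩ T).card := by
              rw [hint, ← hα]
              calc α*β ≤ α*(3*k) := Nat.mul_le_mul le_rfl hβc
                _ = 3*k*α := by ring
            exact le_trans hfin (le_trans (Nat.le_add_right _ _)
              (le_trans (Nat.le_add_left _ _) (Nat.le_add_left _ _)))
          · have hint : (NX B y x v) ∩ T = NX B y x v := Finset.inter_eq_left.2 hs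
            have hfin : α*β ≤ 3*k * ((NX B y x v) ∩ T).card := by
              rw [hint, ← hβ]
              calc α*β ≤ (3*k)*β := Nat.mul_le_mul hαc le_rfl
                _ = 3*k*β := by ring
            exact le_trans hfin (le_trans (Nat.le_add_left _ _)
              (le_trans (Nat.le_add_left _ _) (Nat.le_add_left _ _)))
    calc codeg B x v * codeg B y v ≤ α*β + (6*k+1)*e₀ := hprod
      _ ≤ ((if v ∈ Big then 9*k^2 else 0)
        + ((if v ∈ T ∪ A₁ ∪ A₂ then 3*k^2 else 0)
        + (3*k * ((NX B x y v) ∩ T).card + 3*k * ((NX B y x v) ∩ T).card))) + (6*k+1)*e₀ :=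
          Nat.add_le_add_right hαβ _
      _ = (if v ∈ Big then 9*k^2 else 0)
        + ((if v ∈ T ∪ A₁ ∪ A₂ then 3*k^2 else 0)
        + (3*k * ((NX B x y v) ∩ T).card
        + (3*k * ((NX B y x v) ∩ T).card + (6*k+1)*e₀))) := by ring
  have hRHS : 36 * (t-1)^3 + 3 * (t-1) * (6 * (t-1) + 1) =
      36 * k^3 + 3 * k * (6 * k + 1) := by rw [hk]
  rw [hRHS]
  calc ∑ v : Fin n, (if x ≠ y ∧ v ≠ x ∧ v ≠ y then codeg B x v * codeg B y v else 0)
      ≤ ∑ v : Fin n, ((if v ∈ Big then 9*k^2 else 0)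
        + ((if v ∈ T ∪ A₁ ∪ A₂ then 3*k^2 else 0)
        + (3*k * ((NX B x y v) ∩ T).card
        + (3*k * ((NX B y x v) ∩ T).card
        + (6*k+1) * (if (v ≠ x ∧ v ≠ y ∧ ({x,y,v} : Finset (Fin n)) ∈ B) then 1 else 0))))) :=
        Finset.sum_le_sum (fun v _ => hpoint v)
    _ ≤ 36 * k^3 + 3 * k * (6 * k + 1) := by
        rw [Finset.sum_add_distrib, Finset.sum_add_distrib, Finset.sum_add_distrib,
          Finset.sum_add_distrib]
        have hS1 : ∑ v : Fin n, (if v ∈ Big then 9*k^2 else 0) ≤ 9*k^3 := by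
          rw [Finset.sum_ite_mem, Finset.univ_inter, Finset.sum_const, smul_eq_mul]
          calc Big.card * (9*k^2) ≤ k * (9*k^2) := Nat.mul_le_mul hbigc le_rfl
            _ = 9*k^3 := by ring
        have hS2 : ∑ v : Fin n, (if v ∈ T ∪ A₁ ∪ A₂ then 3*k^2 else 0) ≤ 9*k^3 := by
          rw [Finset.sum_ite_mem, Finset.univ_inter, Finset.sum_const, smul_eq_mul]
          have hcu : (T ∪ A₁ ∪ A₂).card ≤ 3*k := by
            have h1 := Finset.card_union_le (T ∪ A₁) A₂
            have h2 := Finset.card_union_le T A₁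
            omega
          calc (T ∪ A₁ ∪ A₂).card * (3*k^2) ≤ (3*k) * (3*k^2) := Nat.mul_le_mul hcu le_rfl
            _ = 9*k^3 := by ring
        have hS3 : ∑ v : Fin n, 3*k * ((NX B x y v) ∩ T).card ≤ 9*k^3 := by
          rw [← Finset.mul_sum]
          have h1 : ∑ v : Fin n, ((NX B x y v) ∩ T).card ≤ T.card * (3*k) :=
            sum_inter_card_le hcard3 (fun φ hφ => hc3 x φ (fun h => hxT (h ▸ hφ)))
          calc 3*k * ∑ v : Fin n, ((NX B x y v) ∩ T).card ≤ 3*k * (T.card * (3*k)) :=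
                Nat.mul_le_mul le_rfl h1
            _ ≤ 3*k * (k * (3*k)) := Nat.mul_le_mul le_rfl (Nat.mul_le_mul hTc le_rfl)
            _ = 9*k^3 := by ring
        have hS4 : ∑ v : Fin n, 3*k * ((NX B y x v) ∩ T).card ≤ 9*k^3 := by
          rw [← Finset.mul_sum]
          have h1 : ∑ v : Fin n, ((NX B y x v) ∩ T).card ≤ T.card * (3*k) :=
            sum_inter_card_le hcard3 (fun φ hφ => hc3 y φ (fun h => hyT (h ▸ hφ)))
          calc 3*k * ∑ v : Fin n, ((NX B y x v) ∩ T).card ≤ 3*k * (T.card * (3*k)) :=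
                Nat.mul_le_mul le_rfl h1
            _ ≤ 3*k * (k * (3*k)) := Nat.mul_le_mul le_rfl (Nat.mul_le_mul hTc le_rfl)
            _ = 9*k^3 := by ring
        have hS5 : ∑ v : Fin n,
            (6*k+1) * (if (v ≠ x ∧ v ≠ y ∧ ({x,y,v} : Finset (Fin n)) ∈ B) then 1 else 0)
            ≤ 3*k*(6*k+1) := by
          rw [← Finset.mul_sum]
          have h1 : ∑ v : Fin n,
              (if (v ≠ x ∧ v ≠ y ∧ ({x,y,v} : Finset (Fin n)) ∈ B) then 1 else 0) ≤ 3*k := by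
            rw [← Finset.card_filter]
            exact le_trans count_xyv_le (hc3 x y hxy)
          calc (6*k+1) * ∑ v : Fin n,
              (if (v ≠ x ∧ v ≠ y ∧ ({x,y,v} : Finset (Fin n)) ∈ B) then 1 else 0)
              ≤ (6*k+1) * (3*k) := Nat.mul_le_mul le_rfl h1
            _ = 3*k*(6*k+1) := by ring
        calc _ ≤ 9*k^3 + (9*k^3 + (9*k^3 + (9*k^3 + 3*k*(6*k+1)))) :=
              add_le_add hS1 (add_le_add hS2 (add_le_add hS3 (add_le_add hS4 hS5)))
          _ = 36 * k^3 + 3 * k * (6 * k + 1) := by ring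
lemma card_as_sum {n : ℕ} (s : Finset (Fin n)) :
    s.card = ∑ v : Fin n, (if v ∈ s then 1 else 0) := by
  rw [← Finset.card_filter]
  congr 1
  ext v
  simp

lemma ind_mul_ind {p q : Prop} [Decidable p] [Decidable q] :
    ((if p then (1:ℕ) else 0) * (if q then 1 else 0)) = if p ∧ q then 1 else 0 := by
  by_cases hp : p <;> by_cases hq : q <;> simp [hp, hq]

lemma sum_erase_card {n : ℕ} (s t : Finset (Fin n)) :
    (∑ x ∈ s, (t.erase x).card) + (s ∩ t).card = s.card * t.card := by
  have hpt : ∀ x ∈ s, (t.erase x).card + (if x ∈ t then 1 else 0) = t.card := by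
    intro x _
    by_cases hx : x ∈ t
    · rw [if_pos hx, Finset.card_erase_of_mem hx]
      have : 1 ≤ t.card := Finset.card_pos.2 ⟨x, hx⟩
      omega
    · rw [if_neg hx, Finset.erase_eq_of_notMem hx]; omega
  calc (∑ x ∈ s, (t.erase x).card) + (s ∩ t).card
      = (∑ x ∈ s, (t.erase x).card) + ∑ x ∈ s, (if x ∈ t then 1 else 0) := by
        rw [← Finset.filter_mem_eq_inter, Finset.card_filter]
    _ = ∑ x ∈ s, ((t.erase x).card + (if x ∈ t then 1 else 0)) := Finset.sum_add_distrib.symm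
    _ = ∑ _x ∈ s, t.card := Finset.sum_congr rfl hpt
    _ = s.card * t.card := by rw [Finset.sum_const, smul_eq_mul]

lemma inter_erase_eq {n : ℕ} (e f : Finset (Fin n)) (v : Fin n) :
    (e.erase v) ∩ (f.erase v) = (e ∩ f).erase v := by
  ext z
  simp only [Finset.mem_inter, Finset.mem_erase]
  tauto

lemma degree_sum {n : ℕ} (B : Finset (Finset (Fin n))) (hcard3 : ∀ e ∈ B, e.card = 3) :
    ∑ v : Fin n, (B.filter (fun e => v ∈ e)).card = 3 * B.card := by
  classical
  calc ∑ v : Fin n, (B.filter (fun e => v ∈ e)).card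
      = ∑ v : Fin n, ∑ e ∈ B, (if v ∈ e then 1 else 0) :=
        Finset.sum_congr rfl (fun v _ => Finset.card_filter _ _)
    _ = ∑ e ∈ B, ∑ v : Fin n, (if v ∈ e then 1 else 0) := Finset.sum_comm
    _ = ∑ e ∈ B, e.card := Finset.sum_congr rfl (fun e _ => (card_as_sum e).symm)
    _ = ∑ _e ∈ B, 3 := Finset.sum_congr rfl hcard3
    _ = 3 * B.card := by rw [Finset.sum_const, smul_eq_mul, Nat.mul_comm]

lemma sum_inter_eq_sum_deg_sq {n : ℕ} (B : Finset (Finset (Fin n))) :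
    ∑ e ∈ B, ∑ f ∈ B, (e ∩ f).card =
      ∑ v : Fin n, ((B.filter (fun e => v ∈ e)).card)^2 := by
  classical
  calc ∑ e ∈ B, ∑ f ∈ B, (e ∩ f).card
      = ∑ e ∈ B, ∑ f ∈ B, ∑ v : Fin n, (if v ∈ e ∧ v ∈ f then 1 else 0) := by
        refine Finset.sum_congr rfl fun e _ => Finset.sum_congr rfl fun f _ => ?_
        rw [card_as_sum (e ∩ f)]
        exact Finset.sum_congr rfl fun v _ => if_congr (by simp) rfl rfl
    _ = ∑ e ∈ B, ∑ v : Fin n, ∑ f ∈ B, (if v ∈ e ∧ v ∈ f then 1 else 0) :=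
        Finset.sum_congr rfl fun e _ => Finset.sum_comm
    _ = ∑ v : Fin n, ∑ e ∈ B, ∑ f ∈ B, (if v ∈ e ∧ v ∈ f then 1 else 0) := Finset.sum_comm
    _ = ∑ v : Fin n, ((B.filter (fun e => v ∈ e)).card)^2 := by
        refine Finset.sum_congr rfl fun v _ => ?_
        rw [sq, Finset.card_filter, Finset.sum_mul_sum]
        exact Finset.sum_congr rfl fun e _ => Finset.sum_congr rfl fun f _ => ind_mul_ind.symm
def I5 {n : ℕ} (e f : Finset (Fin n)) (v x y : Fin n) : ℕ :=
  if x ≠ y ∧ v ≠ x ∧ v ≠ y ∧ x ∈ e ∧ v ∈ e ∧ y ∈ f ∧ v ∈ f then 1 else 0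

lemma pair_count {n : ℕ} {e f : Finset (Fin n)} (he : e.card = 3) (hf : f.card = 3) {v : Fin n}
    (hve : v ∈ e) (hvf : v ∈ f) :
    (∑ x : Fin n, ∑ y : Fin n, I5 e f v x y) + ((e ∩ f).erase v).card = 4 := by
  classical
  have hx_inner : ∀ x : Fin n,
      (∑ y : Fin n, I5 e f v x y)
      = if x ∈ e.erase v then ((f.erase v).erase x).card else 0 := by
    intro x
    by_cases hx : x ∈ e.erase v
    · rw [if_pos hx]
      rw [Finset.mem_erase] at hx
      rw [card_as_sum ((f.erase v).erase x)]
      refine Finset.sum_congr rfl fun y _ => ?_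
      unfold I5
      refine if_congr ?_ rfl rfl
      simp only [Finset.mem_erase]
      constructor
      · rintro ⟨h1, h2, h3, h4, h5, h6, h7⟩
        exact ⟨Ne.symm h1, Ne.symm h3, h6⟩
      · rintro ⟨h1, h2, h3⟩
        exact ⟨Ne.symm h1, Ne.symm hx.1, Ne.symm h2, hx.2, hve, h3, hvf⟩
    · rw [if_neg hx]
      refine Finset.sum_eq_zero fun y _ => ?_
      unfold I5
      rw [if_neg]
      rintro ⟨h1, h2, h3, h4, h5, h6, h7⟩
      exact hx (Finset.mem_erase.2 ⟨Ne.symm h2, h4⟩)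
  have hs : (∑ x : Fin n, ∑ y : Fin n, I5 e f v x y)
      = ∑ x ∈ e.erase v, ((f.erase v).erase x).card := by
    calc (∑ x : Fin n, ∑ y : Fin n, I5 e f v x y)
        = ∑ x : Fin n, (if x ∈ e.erase v then ((f.erase v).erase x).card else 0) :=
          Finset.sum_congr rfl fun x _ => hx_inner x
      _ = ∑ x ∈ Finset.univ.filter (· ∈ e.erase v), ((f.erase v).erase x).card :=
          (Finset.sum_filter _ _).symm
      _ = ∑ x ∈ e.erase v, ((f.erase v).erase x).card := by
          congr 1
          ext z
          simp
  rw [hs]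
  have hid := sum_erase_card (e.erase v) (f.erase v)
  rw [inter_erase_eq] at hid
  rw [Finset.card_erase_of_mem hve, Finset.card_erase_of_mem hvf, he, hf] at hid
  exact hid

lemma GS_eq {n : ℕ} (B : Finset (Finset (Fin n))) :
    (∑ x : Fin n, ∑ y : Fin n, ∑ v : Fin n,
      (if x ≠ y ∧ v ≠ x ∧ v ≠ y then codeg B x v * codeg B y v else 0))
    = ∑ e ∈ B, ∑ f ∈ B, ∑ v : Fin n, ∑ x : Fin n, ∑ y : Fin n, I5 e f v x y := by
  classical
  have hpt : ∀ x y v : Fin n,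
      (if x ≠ y ∧ v ≠ x ∧ v ≠ y then codeg B x v * codeg B y v else 0)
      = ∑ e ∈ B, ∑ f ∈ B, I5 e f v x y := by
    intro x y v
    by_cases h : x ≠ y ∧ v ≠ x ∧ v ≠ y
    · rw [if_pos h]
      unfold codeg
      rw [Finset.card_filter, Finset.card_filter, Finset.sum_mul_sum]
      refine Finset.sum_congr rfl fun e _ => Finset.sum_congr rfl fun f _ => ?_
      rw [ind_mul_ind]
      unfold I5
      exact if_congr (by tauto) rfl rfl
    · rw [if_neg h]
      symm
      refine Finset.sum_eq_zero fun e _ => Finset.sum_eq_zero fun f _ => ?_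
      unfold I5
      rw [if_neg]
      rintro ⟨h1, h2, h3, -⟩
      exact h ⟨h1, h2, h3⟩
  calc (∑ x : Fin n, ∑ y : Fin n, ∑ v : Fin n,
        (if x ≠ y ∧ v ≠ x ∧ v ≠ y then codeg B x v * codeg B y v else 0))
      = ∑ x : Fin n, ∑ y : Fin n, ∑ v : Fin n, ∑ e ∈ B, ∑ f ∈ B, I5 e f v x y :=
        Finset.sum_congr rfl fun x _ => Finset.sum_congr rfl fun y _ =>
          Finset.sum_congr rfl fun v _ => hpt x y v
    _ = ∑ x : Fin n, ∑ y : Fin n, ∑ e ∈ B, ∑ v : Fin n, ∑ f ∈ B, I5 e f v x y :=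
        Finset.sum_congr rfl fun x _ => Finset.sum_congr rfl fun y _ => Finset.sum_comm
    _ = ∑ x : Fin n, ∑ e ∈ B, ∑ y : Fin n, ∑ v : Fin n, ∑ f ∈ B, I5 e f v x y :=
        Finset.sum_congr rfl fun x _ => Finset.sum_comm
    _ = ∑ e ∈ B, ∑ x : Fin n, ∑ y : Fin n, ∑ v : Fin n, ∑ f ∈ B, I5 e f v x y :=
        Finset.sum_comm
    _ = ∑ e ∈ B, ∑ x : Fin n, ∑ y : Fin n, ∑ f ∈ B, ∑ v : Fin n, I5 e f v x y :=
        Finset.sum_congr rfl fun e _ => Finset.sum_congr rfl fun x _ =>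
          Finset.sum_congr rfl fun y _ => Finset.sum_comm
    _ = ∑ e ∈ B, ∑ x : Fin n, ∑ f ∈ B, ∑ y : Fin n, ∑ v : Fin n, I5 e f v x y :=
        Finset.sum_congr rfl fun e _ => Finset.sum_congr rfl fun x _ => Finset.sum_comm
    _ = ∑ e ∈ B, ∑ f ∈ B, ∑ x : Fin n, ∑ y : Fin n, ∑ v : Fin n, I5 e f v x y :=
        Finset.sum_congr rfl fun e _ => Finset.sum_comm
    _ = ∑ e ∈ B, ∑ f ∈ B, ∑ x : Fin n, ∑ v : Fin n, ∑ y : Fin n, I5 e f v x y :=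
        Finset.sum_congr rfl fun e _ => Finset.sum_congr rfl fun f _ =>
          Finset.sum_congr rfl fun x _ => Finset.sum_comm
    _ = ∑ e ∈ B, ∑ f ∈ B, ∑ v : Fin n, ∑ x : Fin n, ∑ y : Fin n, I5 e f v x y :=
        Finset.sum_congr rfl fun e _ => Finset.sum_congr rfl fun f _ => Finset.sum_comm

lemma X_bound {n t : ℕ} (B : Finset (Finset (Fin n))) (ht : 3 ≤ t)
    (hcard3 : ∀ e ∈ B, e.card = 3)
    (hcodeg : ∀ a b : Fin n, a ≠ b → codeg B a b ≤ 3 * t - 3) :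
    ∑ e ∈ B, ∑ f ∈ B, ∑ v : Fin n,
      (if v ∈ e ∧ v ∈ f then ((e ∩ f).erase v).card else 0) ≤ 18 * (t-1) * B.card := by
  classical
  have hpt : ∀ (e f : Finset (Fin n)) (v : Fin n),
      (if v ∈ e ∧ v ∈ f then ((e ∩ f).erase v).card else 0)
      = ∑ w : Fin n, (if (v ∈ e ∧ w ∈ e) ∧ (v ∈ f ∧ w ∈ f) ∧ w ≠ v then 1 else 0) := by
    intro e f v
    by_cases h : v ∈ e ∧ v ∈ f
    · rw [if_pos h, card_as_sum ((e ∩ f).erase v)]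
      refine Finset.sum_congr rfl fun w _ => if_congr ?_ rfl rfl
      simp only [Finset.mem_erase, Finset.mem_inter]
      tauto
    · rw [if_neg h]
      symm
      exact Finset.sum_eq_zero fun w _ => by rw [if_neg (by tauto)]
  have hstep1 : ∑ e ∈ B, ∑ f ∈ B, ∑ v : Fin n,
      (if v ∈ e ∧ v ∈ f then ((e ∩ f).erase v).card else 0)
      = ∑ v : Fin n, ∑ w : Fin n, ∑ e ∈ B, ∑ f ∈ B,
        (if (v ∈ e ∧ w ∈ e) ∧ (v ∈ f ∧ w ∈ f) ∧ w ≠ v then 1 else 0) := by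
    calc ∑ e ∈ B, ∑ f ∈ B, ∑ v : Fin n,
        (if v ∈ e ∧ v ∈ f then ((e ∩ f).erase v).card else 0)
        = ∑ e ∈ B, ∑ f ∈ B, ∑ v : Fin n, ∑ w : Fin n,
          (if (v ∈ e ∧ w ∈ e) ∧ (v ∈ f ∧ w ∈ f) ∧ w ≠ v then 1 else 0) :=
          Finset.sum_congr rfl fun e _ => Finset.sum_congr rfl fun f _ =>
            Finset.sum_congr rfl fun v _ => hpt e f v
      _ = ∑ e ∈ B, ∑ v : Fin n, ∑ f ∈ B, ∑ w : Fin n, _ :=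
          Finset.sum_congr rfl fun e _ => Finset.sum_comm
      _ = ∑ v : Fin n, ∑ e ∈ B, ∑ f ∈ B, ∑ w : Fin n, _ := Finset.sum_comm
      _ = ∑ v : Fin n, ∑ e ∈ B, ∑ w : Fin n, ∑ f ∈ B, _ :=
          Finset.sum_congr rfl fun v _ => Finset.sum_congr rfl fun e _ => Finset.sum_comm
      _ = ∑ v : Fin n, ∑ w : Fin n, ∑ e ∈ B, ∑ f ∈ B, _ :=
          Finset.sum_congr rfl fun v _ => Finset.sum_comm
  rw [hstep1]
  have hpt2 : ∀ v w : Fin n, ∑ e ∈ B, ∑ f ∈ B,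
      (if (v ∈ e ∧ w ∈ e) ∧ (v ∈ f ∧ w ∈ f) ∧ w ≠ v then 1 else 0)
      = if w ≠ v then codeg B v w * codeg B v w else 0 := by
    intro v w
    by_cases h : w ≠ v
    · rw [if_pos h]
      unfold codeg
      rw [Finset.card_filter, Finset.sum_mul_sum]
      refine Finset.sum_congr rfl fun e _ => Finset.sum_congr rfl fun f _ => ?_
      rw [ind_mul_ind]
      exact if_congr (by tauto) rfl rfl
    · rw [if_neg h]
      exact Finset.sum_eq_zero fun e _ => Finset.sum_eq_zero fun f _ => by
        rw [if_neg (by tauto)]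
  have hstep2 : ∑ v : Fin n, ∑ w : Fin n, ∑ e ∈ B, ∑ f ∈ B,
      (if (v ∈ e ∧ w ∈ e) ∧ (v ∈ f ∧ w ∈ f) ∧ w ≠ v then 1 else 0)
      ≤ ∑ v : Fin n, ∑ w : Fin n,
        (3*(t-1)) * (if w ≠ v then codeg B v w else 0) := by
    refine Finset.sum_le_sum fun v _ => Finset.sum_le_sum fun w _ => ?_
    rw [hpt2 v w]
    by_cases h : w ≠ v
    · rw [if_pos h, if_pos h]
      have hle : codeg B v w ≤ 3*(t-1) := by
        have := hcodeg v w (Ne.symm h)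
        omega
      exact Nat.mul_le_mul hle le_rfl
    · rw [if_neg h, if_neg h, Nat.mul_zero]
  have hstep3 : ∑ v : Fin n, ∑ w : Fin n, (3*(t-1)) * (if w ≠ v then codeg B v w else 0)
      = (3*(t-1)) * ∑ v : Fin n, ∑ w : Fin n, (if w ≠ v then codeg B v w else 0) := by
    rw [Finset.mul_sum]
    exact Finset.sum_congr rfl fun v _ => by rw [Finset.mul_sum]
  have hstep4 : ∑ v : Fin n, ∑ w : Fin n, (if w ≠ v then codeg B v w else 0)
      = 6 * B.card := by
    have hpt3 : ∀ v w : Fin n, (if w ≠ v then codeg B v w else 0)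
        = ∑ e ∈ B, (if v ∈ e ∧ w ∈ e ∧ w ≠ v then 1 else 0) := by
      intro v w
      by_cases h : w ≠ v
      · rw [if_pos h]
        unfold codeg
        rw [Finset.card_filter]
        exact Finset.sum_congr rfl fun e _ => if_congr (by tauto) rfl rfl
      · rw [if_neg h]
        exact (Finset.sum_eq_zero fun e _ => by rw [if_neg (by tauto)]).symm
    calc ∑ v : Fin n, ∑ w : Fin n, (if w ≠ v then codeg B v w else 0)
        = ∑ v : Fin n, ∑ w : Fin n, ∑ e ∈ B, (if v ∈ e ∧ w ∈ e ∧ w ≠ v then 1 else 0) :=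
          Finset.sum_congr rfl fun v _ => Finset.sum_congr rfl fun w _ => hpt3 v w
      _ = ∑ v : Fin n, ∑ e ∈ B, ∑ w : Fin n, (if v ∈ e ∧ w ∈ e ∧ w ≠ v then 1 else 0) :=
          Finset.sum_congr rfl fun v _ => Finset.sum_comm
      _ = ∑ e ∈ B, ∑ v : Fin n, ∑ w : Fin n, (if v ∈ e ∧ w ∈ e ∧ w ≠ v then 1 else 0) :=
          Finset.sum_comm
      _ = ∑ _e ∈ B, 6 := by
          refine Finset.sum_congr rfl fun e he => ?_
          have hinner : ∀ v : Fin n, ∑ w : Fin n, (if v ∈ e ∧ w ∈ e ∧ w ≠ v then 1 else 0)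
              = if v ∈ e then (e.erase v).card else 0 := by
            intro v
            by_cases hv : v ∈ e
            · rw [if_pos hv, card_as_sum (e.erase v)]
              refine Finset.sum_congr rfl fun w _ => if_congr ?_ rfl rfl
              simp only [Finset.mem_erase]
              tauto
            · rw [if_neg hv]
              exact Finset.sum_eq_zero fun w _ => by rw [if_neg (by tauto)]
          calc ∑ v : Fin n, ∑ w : Fin n, (if v ∈ e ∧ w ∈ e ∧ w ≠ v then 1 else 0)
              = ∑ v : Fin n, (if v ∈ e then (e.erase v).card else 0) :=
                Finset.sum_congr rfl fun v _ => hinner v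
            _ = ∑ v ∈ Finset.univ.filter (· ∈ e), (e.erase v).card :=
                (Finset.sum_filter _ _).symm
            _ = ∑ v ∈ e, (e.erase v).card := by congr 1; ext z; simp
            _ = ∑ _v ∈ e, 2 := Finset.sum_congr rfl fun v hv => by
                rw [Finset.card_erase_of_mem hv, hcard3 e he]
            _ = 6 := by rw [Finset.sum_const, smul_eq_mul, hcard3 e he]
      _ = 6 * B.card := by rw [Finset.sum_const, smul_eq_mul, Nat.mul_comm]
  calc ∑ v : Fin n, ∑ w : Fin n, ∑ e ∈ B, ∑ f ∈ B,
      (if (v ∈ e ∧ w ∈ e) ∧ (v ∈ f ∧ w ∈ f) ∧ w ≠ v then 1 else 0)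
      ≤ ∑ v : Fin n, ∑ w : Fin n, (3*(t-1)) * (if w ≠ v then codeg B v w else 0) := hstep2
    _ = (3*(t-1)) * (6 * B.card) := by rw [hstep3, hstep4]
    _ = 18 * (t-1) * B.card := by ring
lemma global_bound {n t : ℕ} (B : Finset (Finset (Fin n))) (ht : 3 ≤ t)
    (hcard3 : ∀ e ∈ B, e.card = 3) (hnt : ¬ HasK2tTrace t B)
    (hcodeg : ∀ a b : Fin n, a ≠ b → codeg B a b ≤ 3 * t - 3) :
    4 * ∑ v : Fin n, ((B.filter (fun e => v ∈ e)).card)^2 ≤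
      n * (n * (36*(t-1)^3 + 3*(t-1)*(6*(t-1)+1))) + 18*(t-1)*B.card := by
  classical
  have hkey : ∀ e ∈ B, ∀ f ∈ B,
      4 * (e ∩ f).card = (∑ v : Fin n, ∑ x : Fin n, ∑ y : Fin n, I5 e f v x y)
        + ∑ v : Fin n, (if v ∈ e ∧ v ∈ f then ((e ∩ f).erase v).card else 0) := by
    intro e he f hf
    have h1 : ∑ v : Fin n, ∑ x : Fin n, ∑ y : Fin n, I5 e f v x y
        = ∑ v ∈ e ∩ f, ∑ x : Fin n, ∑ y : Fin n, I5 e f v x y := by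
      symm
      apply Finset.sum_subset (Finset.subset_univ _)
      intro v _ hv
      refine Finset.sum_eq_zero fun x _ => Finset.sum_eq_zero fun y _ => ?_
      unfold I5
      rw [if_neg]
      rintro ⟨-, -, -, -, h5, -, h7⟩
      exact hv (Finset.mem_inter.2 ⟨h5, h7⟩)
    have h2 : ∑ v : Fin n, (if v ∈ e ∧ v ∈ f then ((e ∩ f).erase v).card else 0)
        = ∑ v ∈ e ∩ f, ((e ∩ f).erase v).card := by
      rw [← Finset.sum_filter]
      congr 1
      ext z
      simp [Finset.mem_inter]
    rw [h1, h2, ← Finset.sum_add_distrib]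
    have h3 : ∑ v ∈ e ∩ f, ((∑ x : Fin n, ∑ y : Fin n, I5 e f v x y) + ((e ∩ f).erase v).card)
        = ∑ _v ∈ e ∩ f, 4 := by
      refine Finset.sum_congr rfl fun v hv => ?_
      rw [Finset.mem_inter] at hv
      exact pair_count (hcard3 e he) (hcard3 f hf) hv.1 hv.2
    rw [h3, Finset.sum_const, smul_eq_mul, Nat.mul_comm]
  have hQ : ∀ x y : Fin n,
      (∑ v : Fin n, if x ≠ y ∧ v ≠ x ∧ v ≠ y then codeg B x v * codeg B y v else 0)
        ≤ 36*(t-1)^3 + 3*(t-1)*(6*(t-1)+1) :=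
    perpair B ht hcard3 hnt hcodeg
  calc 4 * ∑ v : Fin n, ((B.filter (fun e => v ∈ e)).card)^2
      = 4 * ∑ e ∈ B, ∑ f ∈ B, (e ∩ f).card := by rw [sum_inter_eq_sum_deg_sq]
    _ = ∑ e ∈ B, ∑ f ∈ B, 4 * (e ∩ f).card := by
        rw [Finset.mul_sum]
        exact Finset.sum_congr rfl fun e _ => Finset.mul_sum _ _ _
    _ = ∑ e ∈ B, ∑ f ∈ B, ((∑ v : Fin n, ∑ x : Fin n, ∑ y : Fin n, I5 e f v x y)
        + ∑ v : Fin n, (if v ∈ e ∧ v ∈ f then ((e ∩ f).erase v).card else 0)) :=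
        Finset.sum_congr rfl fun e he => Finset.sum_congr rfl fun f hf => hkey e he f hf
    _ = (∑ e ∈ B, ∑ f ∈ B, ∑ v : Fin n, ∑ x : Fin n, ∑ y : Fin n, I5 e f v x y)
        + ∑ e ∈ B, ∑ f ∈ B, ∑ v : Fin n,
            (if v ∈ e ∧ v ∈ f then ((e ∩ f).erase v).card else 0) := by
        rw [← Finset.sum_add_distrib]
        exact Finset.sum_congr rfl fun e _ => Finset.sum_add_distrib
    _ ≤ n * (n * (36*(t-1)^3 + 3*(t-1)*(6*(t-1)+1))) + 18*(t-1)*B.card := by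
        apply Nat.add_le_add
        · rw [← GS_eq]
          calc (∑ x : Fin n, ∑ y : Fin n, ∑ v : Fin n,
                (if x ≠ y ∧ v ≠ x ∧ v ≠ y then codeg B x v * codeg B y v else 0))
              ≤ ∑ _x : Fin n, ∑ _y : Fin n, (36*(t-1)^3 + 3*(t-1)*(6*(t-1)+1)) :=
                Finset.sum_le_sum fun x _ => Finset.sum_le_sum fun y _ => hQ x y
            _ = n * (n * (36*(t-1)^3 + 3*(t-1)*(6*(t-1)+1))) := by
                rw [Finset.sum_const, Finset.sum_const, smul_eq_mul, smul_eq_mul,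
                  Finset.card_univ, Fintype.card_fin]
        · exact X_bound B ht hcard3 hcodeg

lemma algebra_step (A F nR b S2 Q' e' : ℝ) (hF0 : 0 ≤ F) (hn : 0 < nR) (hb : 0 ≤ b)
    (h1 : (3*b)^2 ≤ nR * S2) (h2 : 4*S2 ≤ nR*(nR*Q') + e') (hQ : Q' ≤ 4*A) (he : e' ≤ 8*F*b) :
    (3*b/nR)^2*nR ≤ A*nR^2 + 2*F*(3*b/nR)*nR := by
  have hgoal1 : (3*b/nR)^2*nR = 9*b^2/nR := by field_simp; ring
  have hgoal2 : 2*F*(3*b/nR)*nR = 6*F*b := by field_simp; ring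
  rw [hgoal1, hgoal2, div_le_iff₀ hn]
  have h36 : 36*b^2 ≤ nR*(nR*(nR*(4*A)) + 8*F*b) := by
    have hx1 : nR*(nR*Q') ≤ nR*(nR*(4*A)) :=
      mul_le_mul_of_nonneg_left (mul_le_mul_of_nonneg_left hQ hn.le) hn.le
    have hy1 : 36*b^2 ≤ nR*(4*S2) := by nlinarith [h1]
    have hy2 : nR*(4*S2) ≤ nR*(nR*(nR*(4*A)) + 8*F*b) :=
      mul_le_mul_of_nonneg_left (by linarith) hn.le
    linarith
  have hFbn : 0 ≤ F*b*nR := mul_nonneg (mul_nonneg hF0 hb) hn.le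
  nlinarith [h36, hFbn]

lemma main_ineq {t : ℕ} (ht : 3 ≤ t) (n : ℕ) (hn : 0 < n) (B : Finset (Finset (Fin n)))
    (hcard3 : ∀ e ∈ B, e.card = 3) (hnt : ¬ HasK2tTrace t B)
    (hcodeg : ∀ x y : Fin n, x ≠ y → codeg B x y ≤ 3 * t - 3) :
    (3 * (B.card : ℝ) / n) ^ 2 * n ≤
      3 * ((t : ℝ) - 1) ^ 2 * (3 * (t : ℝ) - 1) * (n : ℝ) ^ 2
        + 2 * ((3 * (t : ℝ) - 3) + 3 * ((t : ℝ) - 1) ^ 2 * (6 * (t : ℝ) - 2))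
          * (3 * (B.card : ℝ) / n) * n := by
  have hglob := global_bound B ht hcard3 hnt hcodeg
  have hdeg := degree_sum B hcard3
  have hnR : (0:ℝ) < (n:ℝ) := by exact_mod_cast hn
  have ht3 : (3:ℝ) ≤ (t:ℝ) := by exact_mod_cast ht
  have ht1 : (0:ℝ) ≤ (t:ℝ) - 1 := by linarith
  have htsub : (((t:ℕ)-1 : ℕ) : ℝ) = (t:ℝ) - 1 := by
    have h1 : (1:ℕ) ≤ t := by omega
    push_cast [h1]
    ring
  apply algebra_step
    (3 * ((t : ℝ) - 1) ^ 2 * (3 * (t : ℝ) - 1))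
    ((3 * (t : ℝ) - 3) + 3 * ((t : ℝ) - 1) ^ 2 * (6 * (t : ℝ) - 2))
    ((n:ℝ)) ((B.card : ℝ))
    ((∑ v : Fin n, ((B.filter (fun e => v ∈ e)).card)^2 : ℕ) : ℝ)
    ((36*((t:ℕ)-1)^3 + 3*((t:ℕ)-1)*(6*((t:ℕ)-1)+1) : ℕ) : ℝ)
    (((18*((t:ℕ)-1) : ℕ) : ℝ) * (B.card : ℝ))
  · nlinarith [ht3, mul_nonneg ht1 ht1]
  · exact hnR
  · exact Nat.cast_nonneg _
  · -- Cauchy–Schwarz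
    have h := Finset.sum_mul_sq_le_sq_mul_sq Finset.univ
      (fun _ : Fin n => (1:ℝ)) (fun v => ((B.filter (fun e => v ∈ e)).card : ℝ))
    simp only [one_pow, one_mul, Finset.sum_const, Finset.card_univ, Fintype.card_fin,
      smul_eq_mul, nsmul_eq_mul, mul_one] at h
    have hsumdeg : (∑ v : Fin n, ((B.filter (fun e => v ∈ e)).card : ℝ))
        = 3 * (B.card : ℝ) := by
      rw [← Nat.cast_sum, hdeg]
      push_cast
      ring
    have hsum2 : (∑ v : Fin n, (((B.filter (fun e => v ∈ e)).card : ℝ))^2)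
        = ((∑ v : Fin n, ((B.filter (fun e => v ∈ e)).card)^2 : ℕ) : ℝ) := by
      push_cast
      rfl
    rw [hsumdeg, hsum2] at h
    exact h
  · exact_mod_cast hglob
  · have h1 : (1:ℕ) ≤ t := by omega
    push_cast [h1]
    have hb : (0:ℝ) ≤ 2*(t:ℝ) - 3 := by linarith
    nlinarith [mul_nonneg (mul_nonneg ht1 ht1) hb]
  · rw [show ((18*((t:ℕ)-1) : ℕ) : ℝ) = 18 * ((t:ℝ)-1) by push_cast [show (1:ℕ) ≤ t by omega]; ring]
    have hfge : 18 * ((t:ℝ)-1)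
        ≤ 8 * ((3 * (t : ℝ) - 3) + 3 * ((t : ℝ) - 1) ^ 2 * (6 * (t : ℝ) - 2)) := by
      nlinarith [ht3, mul_nonneg ht1 ht1]
    exact le_trans (mul_le_mul_of_nonneg_right hfge (Nat.cast_nonneg _))
      (by rw [mul_assoc])
theorem stmt_16 (t : ℕ) (ht : 3 ≤ t) :
    (∀ n : ℕ, 0 < n → ∀ B : Finset (Finset (Fin n)), (∀ e ∈ B, e.card = 3) →
      ¬ HasK2tTrace t B → (∀ x y : Fin n, x ≠ y → codeg B x y ≤ 3 * t - 3) →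
      (3 * (B.card : ℝ) / n) ^ 2 * n ≤
        3 * ((t : ℝ) - 1) ^ 2 * (3 * (t : ℝ) - 1) * (n : ℝ) ^ 2
          + 2 * ((3 * (t : ℝ) - 3) + 3 * ((t : ℝ) - 1) ^ 2 * (6 * (t : ℝ) - 2))
            * (3 * (B.card : ℝ) / n) * n) ∧
    ∃ C : ℝ, ∀ n : ℕ, 0 < n → ∀ B : Finset (Finset (Fin n)), (∀ e ∈ B, e.card = 3) →
      ¬ HasK2tTrace t B → (∀ x y : Fin n, x ≠ y → codeg B x y ≤ 3 * t - 3) →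
      3 * (B.card : ℝ) / n
          ≤ Real.sqrt (3 * (3 * (t : ℝ) - 1)) * ((t : ℝ) - 1) * Real.sqrt n + C ∧
      (B.card : ℝ)
          ≤ Real.sqrt (3 * (3 * (t : ℝ) - 1)) * ((t : ℝ) - 1) / 3 * (n : ℝ) ^ ((3 : ℝ) / 2)
            + C * n := by
  have ht3 : (3:ℝ) ≤ (t:ℝ) := by exact_mod_cast ht
  have ht1 : (0:ℝ) ≤ (t:ℝ) - 1 := by linarith
  constructor
  · intro n hn B h1 h2 h3
    exact main_ineq ht n hn B h1 h2 h3
  · refine ⟨2 * ((3 * (t:ℝ) - 3) + 3 * ((t:ℝ) - 1) ^ 2 * (6 * (t:ℝ) - 2)), ?_⟩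
    intro n hn B h1 h2 h3
    have hmain := main_ineq ht n hn B h1 h2 h3
    have hnR : (0:ℝ) < (n:ℝ) := by exact_mod_cast hn
    set F : ℝ := (3 * (t:ℝ) - 3) + 3 * ((t:ℝ) - 1) ^ 2 * (6 * (t:ℝ) - 2) with hF
    set d : ℝ := 3 * (B.card : ℝ) / n with hd
    have hF0 : (0:ℝ) ≤ F := by rw [hF]; nlinarith [ht3, mul_nonneg ht1 ht1]
    have hd0 : 0 ≤ d := by
      rw [hd]
      positivity
    -- divide hmain by n
    have hq : d^2 ≤ 3 * ((t:ℝ) - 1) ^ 2 * (3 * (t:ℝ) - 1) * (n:ℝ) + 2*F*d := by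
      have h2' : d^2*(n:ℝ) ≤ (3 * ((t:ℝ) - 1) ^ 2 * (3 * (t:ℝ) - 1) * (n:ℝ) + 2*F*d)*(n:ℝ) := by
        have hrr : (3 * ((t:ℝ) - 1) ^ 2 * (3 * (t:ℝ) - 1) * (n:ℝ) + 2*F*d)*(n:ℝ)
            = 3 * ((t:ℝ) - 1) ^ 2 * (3 * (t:ℝ) - 1) * (n:ℝ)^2 + 2*F*d*(n:ℝ) := by ring
        rw [hrr]
        exact hmain
      exact le_of_mul_le_mul_right h2' hnR
    set s : ℝ := Real.sqrt (3 * (3 * (t:ℝ) - 1)) * ((t:ℝ) - 1) * Real.sqrt n with hs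
    have hsqrt1 : (0:ℝ) ≤ Real.sqrt (3 * (3 * (t:ℝ) - 1)) := Real.sqrt_nonneg _
    have hsqrt2 : (0:ℝ) ≤ Real.sqrt n := Real.sqrt_nonneg _
    have hs0 : 0 ≤ s := by
      rw [hs]
      exact mul_nonneg (mul_nonneg hsqrt1 ht1) hsqrt2
    have hs2 : s^2 = 3 * ((t:ℝ) - 1) ^ 2 * (3 * (t:ℝ) - 1) * (n:ℝ) := by
      rw [hs, mul_pow, mul_pow, Real.sq_sqrt (by nlinarith [ht3] : (0:ℝ) ≤ 3 * (3 * (t:ℝ) - 1)),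
        Real.sq_sqrt hnR.le]
      ring
    have hd_le : d ≤ s + 2*F := by
      by_contra hcon
      push_neg at hcon
      have hdd : 0 < d := lt_of_le_of_lt (by linarith) hcon
      have hgap : 0 < d - s - 2*F := by linarith
      nlinarith [hq, hs2, mul_pos hdd hgap, mul_nonneg hs0 hgap.le]
    constructor
    · exact hd_le
    · have h32 : (n:ℝ) ^ ((3:ℝ)/2) = (n:ℝ) * Real.sqrt n := by
        rw [Real.sqrt_eq_rpow, show (3:ℝ)/2 = 1 + 1/2 by norm_num, Real.rpow_add hnR,
          Real.rpow_one]
      rw [h32]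
      have hBd : (B.card : ℝ) = d * (n:ℝ) / 3 := by
        rw [hd]
        field_simp
      have h5 : d * (n:ℝ) ≤ (s + 2*F) * (n:ℝ) := mul_le_mul_of_nonneg_right hd_le hnR.le
      have hsn : s * (n:ℝ) = Real.sqrt (3 * (3 * (t:ℝ) - 1)) * ((t:ℝ) - 1)
          * ((n:ℝ) * Real.sqrt n) := by rw [hs]; ring
      have hFn : 0 ≤ F * (n:ℝ) := mul_nonneg hF0 hnR.le
      rw [hBd]
      rw [div_le_iff₀ (by norm_num : (0:ℝ) < 3)]
      calc d * (n:ℝ) ≤ (s + 2*F) * (n:ℝ) := h5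
        _ = s * (n:ℝ) + 2*F*(n:ℝ) := by ring
        _ ≤ s * (n:ℝ) + 3 * (2 * F * (n:ℝ)) := by nlinarith [hFn]
        _ = (Real.sqrt (3 * (3 * (t:ℝ) - 1)) * ((t:ℝ) - 1) / 3 * ((n:ℝ) * Real.sqrt n)
              + 2 * F * (n:ℝ)) * 3 := by rw [hsn]; ring
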